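/- Let P_φ : L¹([0,1]) → L¹([0,1]) be the operator defined by P_φ f(x) = (1/2) f(x/2) + (1/2) f((x+1)/2), and let g ∈ L¹([0,1]). Then the equation φ = P_φ φ + g has a solution in L¹([0,1]) if and only if the series Σ_{k=0}^∞ P_φ^k g converges in L¹([0,1]). Moreover, every solution φ ∈ L¹([0,1]) of this equation is of the form φ = Σ_{k=0}^∞ P_φ^k g + c, where c is a real constant. -/

import Mathlib

open MeasureTheory Filter Set Topology

noncomputable abbrev μ01 : MeasureTheory.Measure ℝ := MeasureTheory.volume.restrict (Set.Icc 0 1)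

/-- The constant function with value `c`, as an element of `L¹([0,1])`. -/
noncomputable def constL1 (c : ℝ) : Lp ℝ 1 μ01 :=
  (MeasureTheory.memLp_const c).toLp fun _ : ℝ => c

open scoped ENNReal NNReal

instance : IsProbabilityMeasure μ01 := ⟨by simp [Measure.restrict_apply, Real.volume_Icc]⟩

lemma map_vol_f0 : Measure.map (fun x : ℝ => x / 2) volume = (2 : ℝ≥0∞) • volume := by
  have : (fun x : ℝ => x / 2) = (fun x : ℝ => (2⁻¹ : ℝ) * x) := by funext x; ring
  rw [this, Real.map_volume_mul_left (by norm_num : (2⁻¹:ℝ) ≠ 0)]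
  norm_num

lemma map_vol_f1 : Measure.map (fun x : ℝ => (x + 1) / 2) volume = (2 : ℝ≥0∞) • volume := by
  have : (fun x : ℝ => (x + 1) / 2) = (fun y : ℝ => y / 2) ∘ (fun x : ℝ => x + 1) := rfl
  rw [this, ← Measure.map_map (by fun_prop) (by fun_prop),
    map_add_right_eq_self volume 1, map_vol_f0]

lemma map_mu01 {f : ℝ → ℝ} (hf : Measurable f)
    (hmap : Measure.map f volume = (2:ℝ≥0∞) • volume) {a b : ℝ}
    (hab : ∀ x, x ∈ Icc (0:ℝ) 1 ↔ f x ∈ Icc a b) :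
    Measure.map f μ01 = (2:ℝ≥0∞) • volume.restrict (Icc a b) := by
  ext A hA
  rw [Measure.map_apply hf hA, μ01, Measure.restrict_apply (hf hA)]
  have hpre : f ⁻¹' A ∩ Icc 0 1 = f ⁻¹' (A ∩ Icc a b) := by
    ext x
    simp only [mem_inter_iff, mem_preimage, mem_inter_iff]
    rw [hab x]
  rw [hpre, ← Measure.map_apply hf (hA.inter measurableSet_Icc), hmap]
  simp [Measure.restrict_apply hA]

lemma qmp_mu01 {f : ℝ → ℝ} (hf : Measurable f)
    (hmap : Measure.map f volume = (2:ℝ≥0∞) • volume) {a b : ℝ}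
    (hab : ∀ x, x ∈ Icc (0:ℝ) 1 ↔ f x ∈ Icc a b) (hsub : Icc a b ⊆ Icc (0:ℝ) 1) :
    Measure.QuasiMeasurePreserving f μ01 μ01 := by
  refine ⟨hf, ?_⟩
  rw [map_mu01 hf hmap hab]
  refine Measure.AbsolutelyContinuous.mk fun s hs h0 => ?_
  have h1 : volume.restrict (Icc a b) s = 0 :=
    le_antisymm (le_trans (Measure.restrict_mono hsub le_rfl s) h0.le) zero_le
  simp [Measure.smul_apply, h1]

lemma integral_comp_mu01 {f : ℝ → ℝ} (hf : Measurable f)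
    (hmap : Measure.map f volume = (2:ℝ≥0∞) • volume) {a b : ℝ}
    (hab : ∀ x, x ∈ Icc (0:ℝ) 1 ↔ f x ∈ Icc a b) (hsub : Icc a b ⊆ Icc (0:ℝ) 1)
    {h : ℝ → ℝ} (hh : Integrable h μ01) :
    Integrable (fun x => h (f x)) μ01 ∧
      ∫ x, h (f x) ∂μ01 = 2 * ∫ x in Icc a b, h x := by
  have hmm : Measure.map f μ01 = (2:ℝ≥0∞) • volume.restrict (Icc a b) :=
    map_mu01 hf hmap hab
  have hac : Measure.map f μ01 ≪ μ01 := (qmp_mu01 hf hmap hab hsub).absolutelyContinuous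
  have hsm : AEStronglyMeasurable h (Measure.map f μ01) :=
    hh.aestronglyMeasurable.mono_ac hac
  have hint : Integrable h (Measure.map f μ01) := by
    rw [hmm]
    exact (hh.mono_measure (Measure.restrict_mono hsub le_rfl)).smul_measure (by norm_num)
  constructor
  · exact (integrable_map_measure hsm hf.aemeasurable).mp hint
  · rw [← integral_map hf.aemeasurable hsm, hmm, integral_smul_measure]
    norm_num

lemma hab0 : ∀ x : ℝ, x ∈ Icc (0:ℝ) 1 ↔ x / 2 ∈ Icc (0:ℝ) (1/2) := by
  intro x; simp only [mem_Icc]; constructor <;> intro ⟨h1, h2⟩ <;> constructor <;> linarith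

lemma hab1 : ∀ x : ℝ, x ∈ Icc (0:ℝ) 1 ↔ (x + 1) / 2 ∈ Icc (1/2 : ℝ) 1 := by
  intro x; simp only [mem_Icc]; constructor <;> intro ⟨h1, h2⟩ <;> constructor <;> linarith

lemma hsub0 : Icc (0:ℝ) (1/2) ⊆ Icc (0:ℝ) 1 := Icc_subset_Icc le_rfl (by norm_num)
lemma hsub1 : Icc (1/2:ℝ) 1 ⊆ Icc (0:ℝ) 1 := Icc_subset_Icc (by norm_num) le_rfl

lemma qmp0 : Measure.QuasiMeasurePreserving (fun x : ℝ => x / 2) μ01 μ01 :=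
  qmp_mu01 (by fun_prop) map_vol_f0 hab0 hsub0

lemma qmp1 : Measure.QuasiMeasurePreserving (fun x : ℝ => (x + 1) / 2) μ01 μ01 :=
  qmp_mu01 (by fun_prop) map_vol_f1 hab1 hsub1

lemma split_integral {h : ℝ → ℝ} (hh : Integrable h μ01) :
    (∫ x in Icc (0:ℝ) (1/2), h x) + ∫ x in Icc (1/2:ℝ) 1, h x = ∫ x, h x ∂μ01 := by
  have hi0 : IntegrableOn h (Icc (0:ℝ) (1/2)) volume :=
    hh.mono_measure (Measure.restrict_mono hsub0 le_rfl)
  have hi1 : IntegrableOn h (Icc (1/2:ℝ) 1) volume :=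
    hh.mono_measure (Measure.restrict_mono hsub1 le_rfl)
  have e1 : (∫ x in Icc (0:ℝ) (1/2), h x) = ∫ x in Ioc (0:ℝ) (1/2), h x :=
    integral_Icc_eq_integral_Ioc
  have e2 : (∫ x in Icc (1/2:ℝ) 1, h x) = ∫ x in Ioc (1/2:ℝ) 1, h x :=
    integral_Icc_eq_integral_Ioc
  have e3 : (∫ x, h x ∂μ01) = ∫ x in Ioc (0:ℝ) 1, h x := integral_Icc_eq_integral_Ioc
  rw [e1, e2, e3, ← Set.Ioc_union_Ioc_eq_Ioc (by norm_num : (0:ℝ) ≤ 1/2) (by norm_num : (1/2:ℝ) ≤ 1)]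
  exact (setIntegral_union (Set.Ioc_disjoint_Ioc_of_le le_rfl) measurableSet_Ioc
    (hi0.mono_set Ioc_subset_Icc_self) (hi1.mono_set Ioc_subset_Icc_self)).symm

lemma comp_conclusions {h : ℝ → ℝ} (hh : Integrable h μ01) :
    Integrable (fun x => h (x / 2)) μ01 ∧ Integrable (fun x => h ((x + 1) / 2)) μ01 ∧
      (∫ x, ((1:ℝ)/2) * h (x / 2) + ((1:ℝ)/2) * h ((x + 1) / 2) ∂μ01) = ∫ x, h x ∂μ01 := by
  obtain ⟨int0, eq0⟩ := integral_comp_mu01 (by fun_prop) map_vol_f0 hab0 hsub0 hh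
  obtain ⟨int1, eq1⟩ := integral_comp_mu01 (by fun_prop) map_vol_f1 hab1 hsub1 hh
  refine ⟨int0, int1, ?_⟩
  rw [integral_add (int0.const_mul _) (int1.const_mul _), integral_const_mul,
    integral_const_mul, eq0, eq1, ← split_integral hh]
  ring

lemma mem01_half {x : ℝ} (hx : x ∈ Icc (0:ℝ) 1) : x / 2 ∈ Icc (0:ℝ) 1 :=
  hsub0 ((hab0 x).mp hx)

lemma mem01_half' {x : ℝ} (hx : x ∈ Icc (0:ℝ) 1) : (x + 1) / 2 ∈ Icc (0:ℝ) 1 :=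
  hsub1 ((hab1 x).mp hx)

section Pfacts

variable {P : Lp ℝ 1 μ01 →L[ℝ] Lp ℝ 1 μ01}
variable (hP : ∀ h : Lp ℝ 1 μ01,
  (P h : ℝ → ℝ) =ᵐ[μ01] fun x => (1 / 2) * (h : ℝ → ℝ) (x / 2) + (1 / 2) * (h : ℝ → ℝ) ((x + 1) / 2))

include hP

lemma integral_P (h : Lp ℝ 1 μ01) :
    ∫ x, (P h : ℝ → ℝ) x ∂μ01 = ∫ x, (h : ℝ → ℝ) x ∂μ01 := by
  have hh : Integrable (h : ℝ → ℝ) μ01 := L1.integrable_coeFn h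
  rw [integral_congr_ae (hP h)]
  exact (comp_conclusions hh).2.2

lemma norm_P_le (h : Lp ℝ 1 μ01) : ‖P h‖ ≤ ‖h‖ := by
  have hh : Integrable (h : ℝ → ℝ) μ01 := L1.integrable_coeFn h
  obtain ⟨int0, int1, _⟩ := comp_conclusions hh.norm
  rw [L1.norm_eq_integral_norm, L1.norm_eq_integral_norm]
  have h1 : (fun x => ‖(P h : ℝ → ℝ) x‖) =ᵐ[μ01]
      fun x => ‖(1/2 : ℝ) * (h : ℝ → ℝ) (x / 2) + (1/2 : ℝ) * (h : ℝ → ℝ) ((x + 1) / 2)‖ :=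
    (hP h).mono fun x hx => by simp only [hx]
  rw [integral_congr_ae h1]
  have h2 : ∀ x : ℝ, ‖(1/2 : ℝ) * (h : ℝ → ℝ) (x / 2) + (1/2 : ℝ) * (h : ℝ → ℝ) ((x + 1) / 2)‖
      ≤ (1/2 : ℝ) * ‖(h : ℝ → ℝ) (x / 2)‖ + (1/2 : ℝ) * ‖(h : ℝ → ℝ) ((x + 1) / 2)‖ := by
    intro x
    calc _ ≤ ‖(1/2:ℝ) * (h : ℝ → ℝ) (x / 2)‖ + ‖(1/2:ℝ) * (h : ℝ → ℝ) ((x+1) / 2)‖ :=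
          norm_add_le _ _
      _ = _ := by simp [norm_mul]
  have hintP : Integrable (fun x => ‖(1/2 : ℝ) * (h : ℝ → ℝ) (x / 2)
      + (1/2 : ℝ) * (h : ℝ → ℝ) ((x + 1) / 2)‖) μ01 :=
    ((L1.integrable_coeFn (P h)).congr (hP h)).norm
  have hbound := (comp_conclusions hh.norm).2.2
  calc (∫ x, ‖(1/2 : ℝ) * (h : ℝ → ℝ) (x / 2) + (1/2 : ℝ) * (h : ℝ → ℝ) ((x + 1) / 2)‖ ∂μ01)
      ≤ ∫ x, (1/2 : ℝ) * ‖(h : ℝ → ℝ) (x / 2)‖ + (1/2 : ℝ) * ‖(h : ℝ → ℝ) ((x + 1) / 2)‖ ∂μ01 :=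
        integral_mono hintP ((int0.const_mul _).add (int1.const_mul _)) h2
    _ = ∫ x, ‖(h : ℝ → ℝ) x‖ ∂μ01 := hbound

lemma norm_Ppow_le (n : ℕ) (h : Lp ℝ 1 μ01) : ‖(P ^ n) h‖ ≤ ‖h‖ := by
  induction n generalizing h with
  | zero => simp
  | succ n ih =>
    have : (P ^ (n + 1)) h = (P ^ n) (P h) := by
      rw [pow_succ]; rfl
    rw [this]
    exact le_trans (ih (P h)) (norm_P_le hP h)

lemma rep_P {h : Lp ℝ 1 μ01} {H : ℝ → ℝ} (hrep : (h : ℝ → ℝ) =ᵐ[μ01] H) :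
    (P h : ℝ → ℝ) =ᵐ[μ01] fun x => (1/2 : ℝ) * H (x / 2) + (1/2 : ℝ) * H ((x + 1) / 2) := by
  have t0 : (fun x : ℝ => (h : ℝ → ℝ) (x / 2)) =ᵐ[μ01] fun x => H (x / 2) :=
    qmp0.ae_eq_comp hrep
  have t1 : (fun x : ℝ => (h : ℝ → ℝ) ((x + 1) / 2)) =ᵐ[μ01] fun x => H ((x + 1) / 2) :=
    qmp1.ae_eq_comp hrep
  filter_upwards [hP h, t0, t1] with x h1 h2 h3
  rw [h1, h2, h3]

lemma P_const (c : ℝ) : P (constL1 c) = constL1 c := by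
  have hc : (constL1 c : ℝ → ℝ) =ᵐ[μ01] fun _ => c := MemLp.coeFn_toLp _
  refine Lp.ext ?_
  refine (rep_P hP hc).trans ?_
  filter_upwards [hc] with x hx
  rw [hx]; ring

lemma rep_pow {H : ℝ → ℝ} {L : ℝ≥0} (hH : LipschitzOnWith L H (Icc 0 1))
    {h : Lp ℝ 1 μ01} (hrep : (h : ℝ → ℝ) =ᵐ[μ01] H) (n : ℕ) :
    ∃ Hn : ℝ → ℝ, ((P ^ n) h : ℝ → ℝ) =ᵐ[μ01] Hn ∧ LipschitzOnWith (L / 2 ^ n) Hn (Icc 0 1) := by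
  induction n with
  | zero =>
    refine ⟨H, ?_, by simpa using hH⟩
    simpa using hrep
  | succ n ih =>
    obtain ⟨Hn, hn1, hn2⟩ := ih
    refine ⟨fun x => (1/2 : ℝ) * Hn (x / 2) + (1/2 : ℝ) * Hn ((x + 1) / 2), ?_, ?_⟩
    · have : (P ^ (n + 1)) h = P ((P ^ n) h) := by rw [pow_succ']; rfl
      rw [this]
      exact rep_P hP hn1
    · refine LipschitzOnWith.of_dist_le_mul fun x hx y hy => ?_
      have d1 := hn2.dist_le_mul _ (mem01_half hx) _ (mem01_half hy)
      have d2 := hn2.dist_le_mul _ (mem01_half' hx) _ (mem01_half' hy)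
      simp only [Real.dist_eq] at d1 d2 ⊢
      have e1 : |x / 2 - y / 2| = |x - y| / 2 := by
        rw [show x / 2 - y / 2 = (x - y) / 2 by ring, abs_div]; norm_num
      have e2 : |(x + 1) / 2 - (y + 1) / 2| = |x - y| / 2 := by
        rw [show (x + 1) / 2 - (y + 1) / 2 = (x - y) / 2 by ring, abs_div]; norm_num
      rw [e1] at d1
      rw [e2] at d2
      have hc : ((L / 2 ^ (n + 1) : ℝ≥0) : ℝ) = ((L / 2 ^ n : ℝ≥0) : ℝ) / 2 := by
        push_cast
        rw [pow_succ]
        ring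
      calc |1 / 2 * Hn (x / 2) + 1 / 2 * Hn ((x + 1) / 2)
            - (1 / 2 * Hn (y / 2) + 1 / 2 * Hn ((y + 1) / 2))|
          ≤ 1 / 2 * |Hn (x / 2) - Hn (y / 2)| + 1 / 2 * |Hn ((x + 1) / 2) - Hn ((y + 1) / 2)| := by
            rw [show (1:ℝ) / 2 * Hn (x / 2) + 1 / 2 * Hn ((x + 1) / 2)
                - (1 / 2 * Hn (y / 2) + 1 / 2 * Hn ((y + 1) / 2))
              = 1/2 * (Hn (x / 2) - Hn (y / 2)) + 1/2 * (Hn ((x+1) / 2) - Hn ((y+1) / 2)) by ring]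
            refine le_trans (abs_add_le _ _) ?_
            have h5 : |(2:ℝ)⁻¹| = 2⁻¹ := abs_of_pos (by norm_num)
            simp [abs_mul, h5]
        _ ≤ (L / 2 ^ (n + 1) : ℝ≥0) * |x - y| := by
            rw [hc]
            nlinarith [abs_nonneg (x - y)]

lemma integral_Ppow (n : ℕ) (h : Lp ℝ 1 μ01) :
    ∫ x, ((P ^ n) h : ℝ → ℝ) x ∂μ01 = ∫ x, (h : ℝ → ℝ) x ∂μ01 := by
  induction n with
  | zero => simp
  | succ n ih =>
    have e : (P ^ (n + 1)) h = P ((P ^ n) h) := by rw [pow_succ']; rfl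
    rw [e, integral_P hP, ih]

lemma norm_pow_sub_const_le {H : ℝ → ℝ} {L : ℝ≥0} (hH : LipschitzOnWith L H (Icc 0 1))
    {h : Lp ℝ 1 μ01} (hrep : (h : ℝ → ℝ) =ᵐ[μ01] H) (n : ℕ) :
    ‖(P ^ n) h - constL1 (∫ x, (h : ℝ → ℝ) x ∂μ01)‖ ≤ (L : ℝ) / 2 ^ n := by
  set c : ℝ := ∫ x, (h : ℝ → ℝ) x ∂μ01 with hc
  obtain ⟨Hn, hn1, hn2⟩ := rep_pow hP hH hrep n
  have hHnInt : Integrable Hn μ01 := (L1.integrable_coeFn ((P ^ n) h)).congr hn1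
  have cHn : ∫ x, Hn x ∂μ01 = c := by
    rw [← integral_congr_ae hn1, integral_Ppow hP]
  set L' : ℝ := ((L / 2 ^ n : ℝ≥0) : ℝ) with hL'
  have hL'nn : 0 ≤ L' := NNReal.coe_nonneg _
  have hpt : ∀ x ∈ Icc (0:ℝ) 1, |Hn x - c| ≤ L' := by
    intro x hx
    have e1 : Hn x - c = ∫ t, (Hn x - Hn t) ∂μ01 := by
      rw [integral_sub (integrable_const _) hHnInt, integral_const]
      simp [cHn]
    rw [e1, ← Real.norm_eq_abs]
    refine le_trans (norm_integral_le_integral_norm _) ?_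
    have hbd : ∀ᵐ t ∂μ01, ‖Hn x - Hn t‖ ≤ L' := by
      filter_upwards [ae_restrict_mem measurableSet_Icc] with t ht
      have := hn2.dist_le_mul x hx t ht
      rw [Real.dist_eq, Real.dist_eq] at this
      refine le_trans this ?_
      have habs : |x - t| ≤ 1 := by
        rw [abs_le]
        simp only [mem_Icc] at hx ht
        constructor <;> linarith
      calc (↑(L / 2 ^ n) : ℝ) * |x - t| ≤ ↑(L / 2 ^ n) * 1 := by
            exact mul_le_mul_of_nonneg_left habs (NNReal.coe_nonneg _)
        _ = L' := by rw [mul_one]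
    refine le_trans (integral_mono_ae ((integrable_const (Hn x)).sub hHnInt).norm
      (integrable_const _) hbd) ?_
    exact le_of_eq (by rw [integral_const, probReal_univ, one_smul])
  have hconst : (constL1 c : ℝ → ℝ) =ᵐ[μ01] fun _ => c := MemLp.coeFn_toLp _
  have hcoe : (fun x => ‖(((P ^ n) h - constL1 c : Lp ℝ 1 μ01) : ℝ → ℝ) x‖) =ᵐ[μ01]
      fun x => ‖Hn x - c‖ := by
    filter_upwards [Lp.coeFn_sub ((P ^ n) h) (constL1 c), hn1, hconst] with x e1 e2 e3
    simp only [e1, Pi.sub_apply, e2, e3]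
  rw [L1.norm_eq_integral_norm, integral_congr_ae hcoe]
  have hfin : (∫ x, ‖Hn x - c‖ ∂μ01) ≤ L' := by
    have hint : Integrable (fun x => Hn x - c) μ01 := hHnInt.sub (integrable_const _)
    have hci : (∫ _ : ℝ, L' ∂μ01) = L' := by simp
    have hmono : (∫ x, ‖Hn x - c‖ ∂μ01) ≤ ∫ _ : ℝ, L' ∂μ01 := by
      refine integral_mono_ae hint.norm (integrable_const _) ?_
      filter_upwards [ae_restrict_mem measurableSet_Icc] with t ht
      exact hpt t ht
    rw [hci] at hmono
    exact hmono
  refine le_trans hfin (le_of_eq ?_)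
  rw [hL']
  push_cast
  ring

end Pfacts


instance : μ01.WeaklyRegular :=
  MeasureTheory.Measure.WeaklyRegular.restrict_of_measure_ne_top (by
    rw [Real.volume_Icc]; norm_num)

lemma norm_sub_toLp (h : Lp ℝ 1 μ01) {K : ℝ → ℝ} (hK : MemLp K 1 μ01) :
    ‖h - hK.toLp K‖ = ∫ x, ‖(h : ℝ → ℝ) x - K x‖ ∂μ01 := by
  rw [L1.norm_eq_integral_norm]
  refine integral_congr_ae ?_
  filter_upwards [Lp.coeFn_sub h (hK.toLp K), hK.coeFn_toLp] with x e1 e2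
  simp only [e1, Pi.sub_apply, e2]

lemma exists_lip_approx (h : Lp ℝ 1 μ01) {ε : ℝ} (hε : 0 < ε) :
    ∃ (K : ℝ → ℝ) (L : ℝ≥0) (hK : MemLp K 1 μ01),
      LipschitzOnWith L K (Icc 0 1) ∧ ‖h - hK.toLp K‖ ≤ ε := by
  have hInt : Integrable (h : ℝ → ℝ) μ01 := L1.integrable_coeFn h
  obtain ⟨G, hG, hGint⟩ := hInt.exists_boundedContinuous_integral_sub_le (half_pos hε)
  obtain ⟨p, hp⟩ := exists_polynomial_near_of_continuousOn 0 1 G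
    G.continuous.continuousOn (ε/2) (half_pos hε)
  set K : ℝ → ℝ := fun x => p.eval x with hKdef
  have hKc : Continuous K := p.continuous_aeval
  have hKint : Integrable K μ01 := hKc.continuousOn.integrableOn_Icc
  have hKmem : MemLp K 1 μ01 := memLp_one_iff_integrable.mpr hKint
  -- Lipschitz constant
  obtain ⟨C, hC⟩ := isCompact_Icc.exists_bound_of_continuousOn
    (p.derivative.continuous_aeval.continuousOn (s := Icc (0:ℝ) 1))
  have hC0 : 0 ≤ C := le_trans (norm_nonneg _) (hC 0 (by simp))
  have hlip : LipschitzOnWith (Real.toNNReal C) K (Icc 0 1) := by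
    refine Convex.lipschitzOnWith_of_nnnorm_deriv_le
      (fun x _ => p.differentiableAt) (fun x hx => ?_) (convex_Icc 0 1)
    rw [Polynomial.deriv]
    have := hC x hx
    rw [← NNReal.coe_le_coe]
    rwa [coe_nnnorm, Real.coe_toNNReal _ hC0]
  refine ⟨K, Real.toNNReal C, hKmem, hlip, ?_⟩
  rw [norm_sub_toLp]
  have tri : ∀ x : ℝ, ‖(h : ℝ → ℝ) x - K x‖ ≤ ‖(h : ℝ → ℝ) x - G x‖ + ‖G x - K x‖ := by
    intro x
    calc ‖(h : ℝ → ℝ) x - K x‖ = ‖((h : ℝ → ℝ) x - G x) + (G x - K x)‖ := by ring_nf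
      _ ≤ _ := norm_add_le _ _
  have int1 : Integrable (fun x => ‖(h : ℝ → ℝ) x - G x‖) μ01 :=
    (hInt.sub hGint).norm
  have int2 : Integrable (fun x => ‖G x - K x‖) μ01 :=
    (hGint.sub hKint).norm
  have hGK : (∫ x, ‖G x - K x‖ ∂μ01) ≤ ε/2 := by
    have hb : ∀ᵐ x ∂μ01, ‖G x - K x‖ ≤ ε/2 := by
      filter_upwards [ae_restrict_mem measurableSet_Icc] with x hx
      rw [Real.norm_eq_abs, abs_sub_comm]
      exact (hp x hx).le
    have := integral_mono_ae int2 (integrable_const (ε/2)) hb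
    simpa using this
  calc (∫ x, ‖(h : ℝ → ℝ) x - K x‖ ∂μ01)
      ≤ ∫ x, ‖(h : ℝ → ℝ) x - G x‖ + ‖G x - K x‖ ∂μ01 :=
        integral_mono ((hInt.sub hKint).norm) (int1.add int2) tri
    _ = (∫ x, ‖(h : ℝ → ℝ) x - G x‖ ∂μ01) + ∫ x, ‖G x - K x‖ ∂μ01 :=
        integral_add int1 int2
    _ ≤ ε/2 + ε/2 := add_le_add hG hGK
    _ = ε := by ring

lemma norm_constL1_sub (a b : ℝ) : ‖constL1 a - constL1 b‖ ≤ |a - b| := by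
  rw [L1.norm_eq_integral_norm]
  have hcoe : (fun x => ‖((constL1 a - constL1 b : Lp ℝ 1 μ01) : ℝ → ℝ) x‖) =ᵐ[μ01]
      fun _ => |a - b| := by
    have ha : (constL1 a : ℝ → ℝ) =ᵐ[μ01] fun _ => a := MemLp.coeFn_toLp _
    have hb : (constL1 b : ℝ → ℝ) =ᵐ[μ01] fun _ => b := MemLp.coeFn_toLp _
    filter_upwards [Lp.coeFn_sub (constL1 a) (constL1 b), ha, hb] with x e1 e2 e3
    simp only [e1, Pi.sub_apply, e2, e3, Real.norm_eq_abs]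
  rw [integral_congr_ae hcoe]
  simp

lemma integral_coe_sub (h k : Lp ℝ 1 μ01) :
    |(∫ x, (h : ℝ → ℝ) x ∂μ01) - ∫ x, (k : ℝ → ℝ) x ∂μ01| ≤ ‖h - k‖ := by
  rw [L1.norm_eq_integral_norm]
  have e0 : (∫ x, ((h - k : Lp ℝ 1 μ01) : ℝ → ℝ) x ∂μ01)
      = (∫ x, (h : ℝ → ℝ) x ∂μ01) - ∫ x, (k : ℝ → ℝ) x ∂μ01 := by
    rw [integral_congr_ae (Lp.coeFn_sub h k)]
    exact integral_sub (L1.integrable_coeFn h) (L1.integrable_coeFn k)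
  rw [← e0, ← Real.norm_eq_abs]
  exact norm_integral_le_integral_norm _

section Pmain

variable {P : Lp ℝ 1 μ01 →L[ℝ] Lp ℝ 1 μ01}
variable (hP : ∀ h : Lp ℝ 1 μ01,
  (P h : ℝ → ℝ) =ᵐ[μ01] fun x => (1 / 2) * (h : ℝ → ℝ) (x / 2) + (1 / 2) * (h : ℝ → ℝ) ((x + 1) / 2))

include hP

lemma tendsto_Ppow (h : Lp ℝ 1 μ01) :
    Tendsto (fun n => (P ^ n) h) atTop (𝓝 (constL1 (∫ x, (h : ℝ → ℝ) x ∂μ01))) := by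
  rw [NormedAddCommGroup.tendsto_atTop]
  intro ε hε
  set c : ℝ := ∫ x, (h : ℝ → ℝ) x ∂μ01 with hc
  obtain ⟨K, L, hK, hlip, happrox⟩ := exists_lip_approx h (ε := ε/4) (by linarith)
  set k : Lp ℝ 1 μ01 := hK.toLp K with hk
  set ck : ℝ := ∫ x, (k : ℝ → ℝ) x ∂μ01 with hck
  have hrep : (k : ℝ → ℝ) =ᵐ[μ01] K := hK.coeFn_toLp
  have hav : |ck - c| ≤ ε/4 := by
    refine le_trans (integral_coe_sub k h) ?_
    rwa [norm_sub_rev]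
  have htend : Tendsto (fun n : ℕ => (L : ℝ) * (1/2)^n) atTop (𝓝 0) := by
    simpa using (tendsto_pow_atTop_nhds_zero_of_lt_one (by norm_num : (0:ℝ) ≤ 1/2)
      (by norm_num : (1/2:ℝ) < 1)).const_mul (L : ℝ)
  have hev : ∀ᶠ n in atTop, (L : ℝ) * (1/2)^n < ε/4 :=
    htend.eventually (gt_mem_nhds (by linarith))
  obtain ⟨N, hN⟩ := eventually_atTop.mp hev
  refine ⟨N, fun n hn => ?_⟩
  have t1 : ‖(P ^ n) h - (P ^ n) k‖ ≤ ε/4 := by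
    rw [← map_sub]
    exact le_trans (norm_Ppow_le hP n (h - k)) happrox
  have t2 : ‖(P ^ n) k - constL1 ck‖ ≤ ε/4 := by
    refine le_trans (norm_pow_sub_const_le hP hlip hrep n) ?_
    have : (L : ℝ) / 2 ^ n = (L : ℝ) * (1/2)^n := by
      rw [div_eq_mul_inv, ← inv_pow]
      norm_num
    rw [this]
    exact (hN n hn).le
  have t3 : ‖constL1 ck - constL1 c‖ ≤ ε/4 :=
    le_trans (norm_constL1_sub ck c) hav
  have hsplit : (P ^ n) h - constL1 c
      = ((P ^ n) h - (P ^ n) k) + ((P ^ n) k - constL1 ck) + (constL1 ck - constL1 c) := by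
    abel
  calc ‖(P ^ n) h - constL1 c‖
      ≤ ‖(P ^ n) h - (P ^ n) k‖ + ‖(P ^ n) k - constL1 ck‖ + ‖constL1 ck - constL1 c‖ := by
        rw [hsplit]
        exact le_trans (norm_add_le _ _) (add_le_add (norm_add_le _ _) le_rfl)
    _ ≤ ε/4 + ε/4 + ε/4 := by linarith
    _ < ε := by linarith

end Pmain

theorem stmt0 (P : Lp ℝ 1 μ01 →L[ℝ] Lp ℝ 1 μ01)
    (hP : ∀ h : Lp ℝ 1 μ01,
      (P h : ℝ → ℝ) =ᵐ[μ01] fun x => (1 / 2) * (h : ℝ → ℝ) (x / 2) + (1 / 2) * (h : ℝ → ℝ) ((x + 1) / 2))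
    (g : Lp ℝ 1 μ01) :
    ((∃ φ : Lp ℝ 1 μ01, φ = P φ + g) ↔
      ∃ s : Lp ℝ 1 μ01, Tendsto (fun m => ∑ k ∈ Finset.range (m + 1), (P ^ k) g) atTop (𝓝 s)) ∧
    ∀ φ : Lp ℝ 1 μ01, φ = P φ + g →
      ∃ c : ℝ, Tendsto (fun m => ∑ k ∈ Finset.range (m + 1), (P ^ k) g) atTop
        (𝓝 (φ - constL1 c)) := by
  have partial_eq : ∀ φ : Lp ℝ 1 μ01, φ = P φ + g →
      ∀ m : ℕ, ∑ k ∈ Finset.range (m + 1), (P ^ k) g = φ - (P ^ (m + 1)) φ := by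
    intro φ hφ m
    have hg : g = φ - P φ := by
      apply eq_sub_of_add_eq
      rw [add_comm]
      exact hφ.symm
    induction m with
    | zero =>
      rw [Finset.sum_range_one, pow_zero, pow_one, ContinuousLinearMap.one_apply, hg]
    | succ m ih =>
      rw [Finset.sum_range_succ, ih, hg, map_sub]
      have e1 : (P ^ (m + 1)) (P φ) = (P ^ (m + 1 + 1)) φ := by rw [pow_succ]; rfl
      rw [e1]
      abel
  have forward : ∀ φ : Lp ℝ 1 μ01, φ = P φ + g →
      Tendsto (fun m => ∑ k ∈ Finset.range (m + 1), (P ^ k) g) atTop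
        (𝓝 (φ - constL1 (∫ x, (φ : ℝ → ℝ) x ∂μ01))) := by
    intro φ hφ
    have h1 : Tendsto (fun m : ℕ => (P ^ (m + 1)) φ) atTop
        (𝓝 (constL1 (∫ x, (φ : ℝ → ℝ) x ∂μ01))) :=
      (tendsto_Ppow hP φ).comp (tendsto_add_atTop_nat 1)
    have h2 : Tendsto (fun m : ℕ => φ - (P ^ (m + 1)) φ) atTop
        (𝓝 (φ - constL1 (∫ x, (φ : ℝ → ℝ) x ∂μ01))) := tendsto_const_nhds.sub h1
    exact h2.congr fun m => (partial_eq φ hφ m).symm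
  refine ⟨⟨?_, ?_⟩, ?_⟩
  · rintro ⟨φ, hφ⟩
    exact ⟨φ - constL1 (∫ x, (φ : ℝ → ℝ) x ∂μ01), forward φ hφ⟩
  · rintro ⟨s, hs⟩
    refine ⟨s, ?_⟩
    have h3 : ∀ m : ℕ, P (∑ k ∈ Finset.range (m + 1), (P ^ k) g) + g
        = ∑ k ∈ Finset.range (m + 1 + 1), (P ^ k) g := by
      intro m
      have e2 : P (∑ k ∈ Finset.range (m + 1), (P ^ k) g)
          = ∑ k ∈ Finset.range (m + 1), (P ^ (k + 1)) g := by
        rw [map_sum]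
        exact Finset.sum_congr rfl fun k _ => by rw [pow_succ']; rfl
      rw [e2, Finset.sum_range_succ' (fun k => (P ^ k) g) (m + 1)]
      simp
    have h4 : Tendsto (fun m : ℕ => ∑ k ∈ Finset.range (m + 1 + 1), (P ^ k) g) atTop (𝓝 s) :=
      hs.comp (tendsto_add_atTop_nat 1)
    have h5 : Tendsto (fun m : ℕ => P (∑ k ∈ Finset.range (m + 1), (P ^ k) g) + g) atTop
        (𝓝 (P s + g)) := ((P.continuous.tendsto s).comp hs).add tendsto_const_nhds
    have h6 : Tendsto (fun m : ℕ => ∑ k ∈ Finset.range (m + 1 + 1), (P ^ k) g) atTop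
        (𝓝 (P s + g)) := h5.congr h3
    exact tendsto_nhds_unique h4 h6
  · intro φ hφ
    exact ⟨∫ x, (φ : ℝ → ℝ) x ∂μ01, forward φ hφ⟩
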